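/- Let C_1 be an (m, m−1) MDS code with generator matrix U (so there is a dual vector λ with all coordinates nonzero and Σ λ_i U_i = 0), and let C_2 have generator matrix V ∈ F^{(n−b)×n}. For E ⊆ [m]×[n] with \bar E = ∪_{i=1}^m {i}×A_i, the pattern E is correctable by C_1 ⊗ C_2 if and only if rank 𝒢_{A_1,...,A_m}[V] = m(n−b), i.e., A_1,...,A_m are V-saturated. -/

import Mathlib

open Matrix

/-- The block matrix `𝒢_{A_1,…,A_ℓ}[V]`. -/
def Gmat {F : Type} [Field F] {k n ℓ : ℕ} (V : Matrix (Fin k) (Fin n) F)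
    (A : Fin ℓ → Finset (Fin n)) :
    Matrix (Fin ℓ × Fin k) (Fin k ⊕ (Σ i : Fin ℓ, {x // x ∈ A i})) F :=
  Matrix.of fun p c =>
    match c with
    | Sum.inl c => if p.2 = c then (1 : F) else 0
    | Sum.inr q => if p.1 = q.1 then V p.2 q.2.1 else 0

/-- Membership in the tensor code `C₁ ⊗ C₂`. -/
def tensorMem {F : Type} [Field F] {m n ma nb : ℕ} (U : Matrix (Fin ma) (Fin m) F)
    (V : Matrix (Fin nb) (Fin n) F) (X : Matrix (Fin m) (Fin n) F) : Prop :=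
  (∀ j, (fun i => X i j) ∈ Submodule.span F (Set.range U)) ∧
  (∀ i, (fun j => X i j) ∈ Submodule.span F (Set.range V))

set_option maxHeartbeats 1000000 in
/-- A nonzero vector in the kernel has all coordinates nonzero, and its
orthogonal complement equals the row span of `U`. -/
lemma exists_dual {F : Type} [Field F] {m : ℕ} (hm : 1 ≤ m)
    (U : Matrix (Fin (m - 1)) (Fin m) F)
    (hU : ∀ S : Finset (Fin m), S.card = m - 1 →
      LinearIndependent F (fun a : {x // x ∈ S} => fun r => U r a.1)) :
    ∃ l : Fin m → F, (∀ i, l i ≠ 0) ∧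
      (∀ v : Fin m → F, v ∈ Submodule.span F (Set.range U) ↔ ∑ i, l i * v i = 0) := by
  classical
  -- a nonzero kernel element
  have hdim : Module.finrank F (Fin m → F) = m := by simp
  have hker : ∃ l : Fin m → F, l ≠ 0 ∧ U.mulVec l = 0 := by
    have h1 := LinearMap.finrank_range_add_finrank_ker U.mulVecLin
    have h2 : Module.finrank F (LinearMap.range U.mulVecLin) ≤ m - 1 := by
      simpa using Submodule.finrank_le (LinearMap.range U.mulVecLin)
    have h3 : 0 < Module.finrank F (LinearMap.ker U.mulVecLin) := by
      rw [hdim] at h1; omega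
    rw [Module.finrank_pos_iff] at h3
    obtain ⟨⟨l, hl⟩, hne⟩ := exists_ne (0 : LinearMap.ker U.mulVecLin)
    refine ⟨l, ?_, ?_⟩
    · intro h0; apply hne; ext; simpa using congrFun h0 _
    · simpa [Matrix.mulVecLin_apply] using hl
  obtain ⟨l, hl0, hlk⟩ := hker
  have hlk' : ∀ r, ∑ i, U r i * l i = 0 := by
    intro r
    have := congrFun hlk r
    simpa [Matrix.mulVec, dotProduct] using this
  -- all coordinates nonzero
  have hnz : ∀ j, l j ≠ 0 := by
    intro j hj
    set S : Finset (Fin m) := Finset.univ.erase j with hS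
    have hScard : S.card = m - 1 := by
      simp [hS, Finset.card_erase_of_mem]
    have hli := hU S hScard
    have hzero : ∀ a : {x // x ∈ S}, l a.1 = 0 := by
      have := Fintype.linearIndependent_iff.mp hli (fun a => l a.1) ?_
      · exact this
      · funext r
        have : ∑ a : {x // x ∈ S}, l a.1 * U r a.1 = ∑ a ∈ S, l a * U r a :=
          S.sum_coe_sort (fun a => l a * U r a)
        have hsum : ∑ a ∈ S, l a * U r a = 0 := by
          have : ∑ a, l a * U r a = 0 := by
            rw [← hlk' r]; exact Finset.sum_congr rfl fun i _ => mul_comm _ _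
          rw [hS]
          rw [← Finset.add_sum_erase _ _ (Finset.mem_univ j)] at this
          simpa [hj] using this
        calc (∑ a : {x // x ∈ S}, l a.1 • fun r' => U r' a.1) r
            = ∑ a : {x // x ∈ S}, l a.1 * U r a.1 := by
              simp [Finset.sum_apply]
          _ = 0 := by rw [this, hsum]
    apply hl0
    funext i
    by_cases hij : i = j
    · simp [hij, hj]
    · exact hzero ⟨i, Finset.mem_erase.mpr ⟨hij, Finset.mem_univ i⟩⟩
  -- the functional
  refine ⟨l, hnz, ?_⟩
  let φ : (Fin m → F) →ₗ[F] F :=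
  { toFun := fun v => ∑ i, l i * v i
    map_add' := by intro x y; simp [mul_add, Finset.sum_add_distrib]
    map_smul' := by intro c x; simp [Finset.mul_sum, mul_left_comm] }
  have hle : Submodule.span F (Set.range U) ≤ LinearMap.ker φ := by
    rw [Submodule.span_le]
    rintro _ ⟨r, rfl⟩
    simp only [SetLike.mem_coe, LinearMap.mem_ker]
    show ∑ i, l i * U r i = 0
    rw [← hlk' r]; exact Finset.sum_congr rfl fun i _ => mul_comm _ _
  -- finrank of span of rows of U is m - 1
  have i0 : Fin m := ⟨0, hm⟩
  have hUrank : U.rank = m - 1 := by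
    have hle1 : U.rank ≤ m - 1 := by
      simpa using U.rank_le_card_height
    have hge : m - 1 ≤ U.rank := by
      set S : Finset (Fin m) := Finset.univ.erase i0 with hS
      have hScard : S.card = m - 1 := by simp [hS, Finset.card_erase_of_mem]
      have hli := hU S hScard
      have hcard := linearIndependent_iff_card_eq_finrank_span.mp hli
      rw [Fintype.card_coe, hScard] at hcard
      rw [Matrix.rank_eq_finrank_span_cols]
      rw [Set.finrank] at hcard
      refine hcard.le.trans (Submodule.finrank_mono (Submodule.span_mono ?_))
      rintro _ ⟨a, rfl⟩
      exact ⟨a.1, rfl⟩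
    omega
  have hspanrank : Module.finrank F (Submodule.span F (Set.range U)) = m - 1 := by
    exact (Matrix.rank_eq_finrank_span_row U).symm.trans hUrank
  -- finrank of kernel of φ is m - 1
  have hkerrank : Module.finrank F (LinearMap.ker φ) = m - 1 := by
    have h1 := LinearMap.finrank_range_add_finrank_ker φ
    rw [hdim] at h1
    have hr1 : Module.finrank F (LinearMap.range φ) = 1 := by
      have hle1 : Module.finrank F (LinearMap.range φ) ≤ 1 := by
        simpa using Submodule.finrank_le (LinearMap.range φ)
      have hpos : 0 < Module.finrank F (LinearMap.range φ) := by
        rw [Module.finrank_pos_iff]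
        refine ⟨⟨⟨l i0, ⟨Pi.single i0 1, ?_⟩⟩, 0, ?_⟩⟩
        · show φ (Pi.single i0 1) = l i0
          simp only [φ, LinearMap.coe_mk, AddHom.coe_mk]
          simp [Pi.single_apply, mul_ite]
        · intro h
          apply hnz i0
          simpa using congrArg Subtype.val h
      omega
    omega
  have := Submodule.eq_of_le_of_finrank_eq hle (by rw [hspanrank, hkerrank])
  intro v
  rw [this]
  exact LinearMap.mem_ker

lemma rank_eq_card_iff {F : Type} [Field F] {ι κ : Type} [Fintype ι] [Fintype κ]
    (M : Matrix ι κ F) : M.rank = Fintype.card ι ↔ LinearIndependent F M := by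
  constructor
  · intro h
    show LinearIndependent F M.row
    rw [linearIndependent_iff_card_eq_finrank_span, Set.finrank,
      ← Matrix.rank_eq_finrank_span_row, h]
  · exact fun h => h.rank_matrix

lemma gmat_sum_eq_zero_iff {F : Type} [Field F] {k n m : ℕ} (V : Matrix (Fin k) (Fin n) F)
    (A : Fin m → Finset (Fin n)) (g : Fin m × Fin k → F) :
    ∑ p, g p • Gmat V A p = 0 ↔
      ((∀ c, ∑ i, g (i, c) = 0) ∧ ∀ i, ∀ a ∈ A i, ∑ r, g (i, r) * V r a = 0) := by
  classical
  constructor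
  · intro h
    constructor
    · intro c
      have := congrFun h (Sum.inl c)
      simpa [Gmat, Finset.sum_apply, Fintype.sum_prod_type, mul_ite,
        Finset.sum_ite_eq'] using this
    · intro i a ha
      have := congrFun h (Sum.inr ⟨i, a, ha⟩)
      simpa [Gmat, Finset.sum_apply, Fintype.sum_prod_type, mul_ite,
        Finset.sum_ite_eq', eq_comm] using this
  · rintro ⟨h1, h2⟩
    funext col
    rcases col with c | ⟨i, a, ha⟩
    · simpa [Gmat, Finset.sum_apply, Fintype.sum_prod_type, mul_ite,
        Finset.sum_ite_eq'] using h1 c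
    · simpa [Gmat, Finset.sum_apply, Fintype.sum_prod_type, mul_ite,
        Finset.sum_ite_eq', eq_comm] using h2 i a ha


/-- For `C₁` an `(m, m−1)` MDS code and `C₂` with generator `V`, the erasure pattern `E` with
`\bar E = ∪ᵢ {i} × Aᵢ` is correctable by `C₁ ⊗ C₂` iff `rank 𝒢_{A_1,…,A_m}[V] = m(n−b)`,
i.e. the sets `A_1,…,A_m` are `V`-saturated. -/
theorem correctable_iff_saturated {F : Type} [Field F] {m n b : ℕ}
    (hm : 1 ≤ m) (hb : b ≤ n)
    (U : Matrix (Fin (m - 1)) (Fin m) F)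
    (hU : ∀ S : Finset (Fin m), S.card = m - 1 →
      LinearIndependent F (fun a : {x // x ∈ S} => fun r => U r a.1))
    (V : Matrix (Fin (n - b)) (Fin n) F) (hV : V.rank = n - b)
    (A : Fin m → Finset (Fin n)) :
    (∀ X Y : Matrix (Fin m) (Fin n) F, tensorMem U V X → tensorMem U V Y →
        (∀ p : Fin m × Fin n, p.2 ∈ A p.1 → X p.1 p.2 = Y p.1 p.2) → X = Y) ↔
      (Gmat V A).rank = m * (n - b) := by
  classical
  obtain ⟨l, hl, hspan⟩ := exists_dual hm U hU
  have hVli : LinearIndependent F V := by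
    show LinearIndependent F V.row
    rw [linearIndependent_iff_card_eq_finrank_span, Set.finrank,
      ← Matrix.rank_eq_finrank_span_row, hV]
    simp
  -- reduce correctability to "only the zero codeword vanishes on the A's"
  have hred : (∀ X Y : Matrix (Fin m) (Fin n) F, tensorMem U V X → tensorMem U V Y →
        (∀ p : Fin m × Fin n, p.2 ∈ A p.1 → X p.1 p.2 = Y p.1 p.2) → X = Y) ↔
      (∀ X : Matrix (Fin m) (Fin n) F, tensorMem U V X →
        (∀ p : Fin m × Fin n, p.2 ∈ A p.1 → X p.1 p.2 = 0) → X = 0) := by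
    constructor
    · intro h X hX hvan
      refine h X 0 hX ⟨fun j => ?_, fun i => ?_⟩ fun p hp => by simpa using hvan p hp
      · exact Submodule.zero_mem _
      · exact Submodule.zero_mem _
    · intro h X Y hX hY hagree
      have hXY : tensorMem U V (X - Y) := by
        refine ⟨fun j => ?_, fun i => ?_⟩
        · have he : (fun i => (X - Y) i j) = (fun i => X i j) - fun i => Y i j := by
            funext i; simp [Matrix.sub_apply]
          rw [he]
          exact Submodule.sub_mem _ (hX.1 j) (hY.1 j)
        · have he : (fun j => (X - Y) i j) = (fun j => X i j) - fun j => Y i j := by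
            funext j; simp [Matrix.sub_apply]
          rw [he]
          exact Submodule.sub_mem _ (hX.2 i) (hY.2 i)
      have := h (X - Y) hXY fun p hp => by
        simp [Matrix.sub_apply, hagree p hp]
      exact sub_eq_zero.mp this
  rw [hred, show m * (n - b) = Fintype.card (Fin m × Fin (n - b)) by simp,
    rank_eq_card_iff]
  refine Iff.trans ?_ Fintype.linearIndependent_iff.symm
  constructor
  · -- correctable → independence of the rows of G
    intro h g hg
    rw [gmat_sum_eq_zero_iff] at hg
    obtain ⟨h1, h2⟩ := hg
    set X : Matrix (Fin m) (Fin n) F :=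
      Matrix.of fun i j => (l i)⁻¹ * ∑ r, g (i, r) * V r j with hXdef
    have hXmem : tensorMem U V X := by
      constructor
      · intro j
        rw [hspan]
        have : ∀ i, l i * X i j = ∑ r, g (i, r) * V r j := by
          intro i
          show l i * ((l i)⁻¹ * _) = _
          rw [← mul_assoc, mul_inv_cancel₀ (hl i), one_mul]
        calc ∑ i, l i * X i j = ∑ i, ∑ r, g (i, r) * V r j :=
              Finset.sum_congr rfl fun i _ => this i
          _ = ∑ r, ∑ i, g (i, r) * V r j := Finset.sum_comm
          _ = ∑ r, (∑ i, g (i, r)) * V r j := by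
              simp [Finset.sum_mul]
          _ = 0 := by simp [h1]
      · intro i
        apply (Submodule.mem_span_range_iff_exists_fun F).mpr
        refine ⟨fun r => (l i)⁻¹ * g (i, r), ?_⟩
        funext j
        simp only [Finset.sum_apply, Pi.smul_apply, smul_eq_mul]
        show ∑ r, (l i)⁻¹ * g (i, r) * V r j = (l i)⁻¹ * ∑ r, g (i, r) * V r j
        rw [Finset.mul_sum]
        exact Finset.sum_congr rfl fun r _ => by ring
    have hXvan : ∀ p : Fin m × Fin n, p.2 ∈ A p.1 → X p.1 p.2 = 0 := by
      intro p hp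
      show (l p.1)⁻¹ * ∑ r, g (p.1, r) * V r p.2 = 0
      rw [h2 p.1 p.2 hp, mul_zero]
    have hX0 := h X hXmem hXvan
    intro p
    have hrow : ∀ r, g (p.1, r) = 0 := by
      apply Fintype.linearIndependent_iff.mp hVli (fun r => g (p.1, r))
      funext j
      have hXj : X p.1 j = 0 := by rw [hX0]; rfl
      have : (l p.1)⁻¹ * ∑ r, g (p.1, r) * V r j = 0 := hXj
      have hsum : ∑ r, g (p.1, r) * V r j = 0 := by
        rcases mul_eq_zero.mp this with h' | h'
        · exact absurd (inv_eq_zero.mp h') (hl p.1)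
        · exact h'
      simpa [Finset.sum_apply] using hsum
    have := hrow p.2
    simpa using this
  · -- independence of the rows of G → correctable
    intro h X hXmem hXvan
    obtain ⟨hcols, hrows⟩ := hXmem
    have hd : ∀ i, ∃ d : Fin (n - b) → F, ∑ r, d r • V r = fun j => X i j := by
      intro i
      exact (Submodule.mem_span_range_iff_exists_fun F).mp (hrows i)
    choose d hd using hd
    have hdX : ∀ i j, ∑ r, d i r * V r j = X i j := by
      intro i j
      have := congrFun (hd i) j
      simpa [Finset.sum_apply] using this
    set g : Fin m × Fin (n - b) → F := fun p => l p.1 * d p.1 p.2 with hgdef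
    have hg0 : ∀ p, g p = 0 := by
      apply h
      rw [gmat_sum_eq_zero_iff]
      constructor
      · intro c
        have hlc : ∀ r, (∑ i, l i * d i r) = 0 := by
          apply Fintype.linearIndependent_iff.mp hVli (fun r => ∑ i, l i * d i r)
          funext j
          have : ∑ r, (∑ i, l i * d i r) * V r j = ∑ i, l i * X i j := by
            calc ∑ r, (∑ i, l i * d i r) * V r j
                = ∑ r, ∑ i, l i * d i r * V r j := by
                  simp [Finset.sum_mul]
              _ = ∑ i, ∑ r, l i * d i r * V r j := Finset.sum_comm
              _ = ∑ i, l i * ∑ r, d i r * V r j := by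
                  refine Finset.sum_congr rfl fun i _ => ?_
                  rw [Finset.mul_sum]
                  exact Finset.sum_congr rfl fun r _ => by ring
              _ = ∑ i, l i * X i j := by simp [hdX]
          have hz : ∑ i, l i * X i j = 0 := (hspan _).mp (hcols j)
          simpa [Finset.sum_apply, this, hz] using (this.trans hz)
        exact hlc c
      · intro i a ha
        have : ∑ r, (l i * d i r) * V r a = l i * X i a := by
          calc ∑ r, (l i * d i r) * V r a = l i * ∑ r, d i r * V r a := by
                rw [Finset.mul_sum]
                exact Finset.sum_congr rfl fun r _ => by ring
            _ = l i * X i a := by rw [hdX]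
        rw [this, hXvan (i, a) ha, mul_zero]
    have hdz : ∀ i r, d i r = 0 := by
      intro i r
      have := hg0 (i, r)
      rcases mul_eq_zero.mp this with h' | h'
      · exact absurd h' (hl i)
      · exact h'
    funext i j
    rw [← hdX i j]
    simp [hdz]
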